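/- Let n ≥ 1, X > 0, T_s > 0, L > 0, Ψ ≥ 0, φ̃ > 0, and let Y : Fin n → ℝ and γ : Fin n → ℝ with γ_i > 0 for all i. For each i let P_i be the unique P > 0 satisfying log(1+P·γ_i) = 1 + (φ̃·γ_i − 1)/(1+P·γ_i), and set μ_i = L/log(1+P_i·γ_i). For a subset S ⊆ Fin n define G(S) = ∑_{i∈S}(Y_i − (X/T_s)·P_i·μ_i) + Ψ·(T_s − ∑_{i∈S} μ_i). If there exist i ∉ S and j ∈ S with Y_i > Y_j and γ_i > γ_j, then G((S \ {j}) ∪ {i}) > G(S), so S does not maximize G. -/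

import Mathlib

/-- For `t > 1`, `1 - 1/t < log t`. -/
lemma aux_log_gt {t : ℝ} (ht : 1 < t) : 1 - 1/t < Real.log t := by
  have h0 : 0 < t := by linarith
  have h := Real.log_lt_sub_one_of_pos (show (0:ℝ) < t⁻¹ by positivity)
    (by
      intro h
      have : t = 1 := by field_simp at h; linarith
      linarith)
  rw [Real.log_inv] at h
  have : 1/t = t⁻¹ := one_div t
  linarith

/-- `t ↦ t log t - t + 1` is strictly increasing on `[1, ∞)`. -/
lemma aux_gmono {a b : ℝ} (ha : 1 ≤ a) (hab : a < b) :
    a * Real.log a - a + 1 < b * Real.log b - b + 1 := by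
  have ha0 : 0 < a := lt_of_lt_of_le one_pos ha
  have hb0 : 0 < b := ha0.trans hab
  have hba : 1 < b / a := (one_lt_div ha0).2 hab
  have h := aux_log_gt hba
  rw [Real.log_div (ne_of_gt hb0) (ne_of_gt ha0)] at h
  have h2 : 1 - 1/(b/a) = 1 - a/b := by
    rw [one_div_div]
  rw [h2] at h
  -- b*(log b - log a) > b - a
  have key : b - a < b * (Real.log b - Real.log a) := by
    have hb' : 0 < b := hb0
    have := (mul_lt_mul_iff_right₀ hb').2 h
    have hab' : b * (1 - a/b) = b - a := by field_simp
    linarith [hab' ▸ this]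
  have hlog_a : 0 ≤ Real.log a := Real.log_nonneg ha
  nlinarith [mul_nonneg (le_of_lt (sub_pos.2 hab)) hlog_a]

lemma aux_D_pos {x : ℝ} (hx : 1 < x) :
    0 < (x * Real.log x - x + 1) * Real.log x := by
  have h1 : (1:ℝ) * Real.log 1 - 1 + 1 < x * Real.log x - x + 1 := aux_gmono le_rfl hx
  simp at h1
  exact mul_pos h1 (Real.log_pos hx)

noncomputable def hfun (t : ℝ) : ℝ := (t - 1) / ((t * Real.log t - t + 1) * Real.log t)

lemma aux_hasDeriv {x : ℝ} (hx : 1 < x) :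
    HasDerivAt hfun
      ((1 * ((x * Real.log x - x + 1) * Real.log x)
        - (x - 1) * (Real.log x * Real.log x + (x * Real.log x - x + 1) * x⁻¹))
        / ((x * Real.log x - x + 1) * Real.log x) ^ 2) x := by
  have hx0 : (0:ℝ) < x := by linarith
  have hlog : HasDerivAt Real.log x⁻¹ x := Real.hasDerivAt_log (ne_of_gt hx0)
  have h1 : HasDerivAt (fun t => t * Real.log t - t + 1) (Real.log x) x := by
    have := (((hasDerivAt_id x).mul hlog).sub (hasDerivAt_id x)).add_const 1
    exact this.congr_deriv (by simp [hx0.ne'])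
  have hD : HasDerivAt (fun t => (t * Real.log t - t + 1) * Real.log t)
      (Real.log x * Real.log x + (x * Real.log x - x + 1) * x⁻¹) x := by
    have := h1.mul hlog
    exact this
  have hN : HasDerivAt (fun t : ℝ => t - 1) 1 x := (hasDerivAt_id x).sub_const 1
  exact hN.div hD (ne_of_gt (aux_D_pos hx))

lemma aux_deriv_neg {x : ℝ} (hx : 1 < x) : deriv hfun x < 0 := by
  rw [(aux_hasDeriv hx).deriv]
  have hx0 : (0:ℝ) < x := by linarith
  set u := Real.log x with hu
  have hu1 : 1 - 1/x < u := aux_log_gt hx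
  have hu2 : u < x - 1 := Real.log_lt_sub_one_of_pos hx0 (ne_of_gt hx)
  have hDpos := aux_D_pos hx
  apply div_neg_of_neg_of_pos _ (by positivity)
  -- numerator < 0
  have hinv : x⁻¹ = 1/x := (one_div x).symm
  rw [hinv]
  have hval : 1 * ((x * u - x + 1) * u)
      - (x - 1) * (u * u + (x * u - x + 1) * (1/x))
      = (x * u^2 - 2*x*(x-1)*u + (x-1)^2) / x := by
    field_simp
    ring
  rw [hval]
  apply div_neg_of_neg_of_pos _ hx0
  -- x*u^2 - 2x(x-1)u + (x-1)^2 = x*(x-1-u)^2 - (x-1)^3 < 0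
  have hb : 0 < x - 1 - u := by linarith
  have hc : x - 1 - u < (x-1)^2 / x := by
    have : 1 - 1/x = (x-1)/x := by field_simp
    rw [this] at hu1
    have : (x-1) - (x-1)/x = (x-1)^2/x := by field_simp
    linarith
  have hsq : x * (x - 1 - u)^2 < (x-1)^3 := by
    have h1 : (x - 1 - u)^2 < ((x-1)^2/x)^2 := by nlinarith
    have h2 : x * ((x-1)^2/x)^2 = (x-1)^4 / x := by field_simp
    have h3 : (x-1)^4 / x < (x-1)^3 := by
      rw [div_lt_iff₀ hx0]
      nlinarith [pow_pos (sub_pos.2 hx) 3]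
    nlinarith
  nlinarith

lemma aux_hfun_anti : StrictAntiOn hfun (Set.Ioi 1) := by
  apply strictAntiOn_of_deriv_neg (convex_Ioi 1)
  · intro x hx
    exact ((aux_hasDeriv hx).differentiableAt).continuousAt.continuousWithinAt
  · intro x hx
    rw [interior_Ioi] at hx
    exact aux_deriv_neg hx

theorem dominated_user_swap_improves
    (n : ℕ) (hn : 1 ≤ n) (X Ts L Ψ φ : ℝ)
    (hX : 0 < X) (hTs : 0 < Ts) (hL : 0 < L) (hΨ : 0 ≤ Ψ) (hφ : 0 < φ)
    (Y γ : Fin n → ℝ) (hγ : ∀ i, 0 < γ i)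
    (P : Fin n → ℝ)
    (hP_pos : ∀ i, 0 < P i)
    (hP_eq : ∀ i, Real.log (1 + P i * γ i) =
      1 + (φ * γ i - 1) / (1 + P i * γ i))
    (hP_unique : ∀ i, ∀ Q : ℝ, 0 < Q →
      Real.log (1 + Q * γ i) = 1 + (φ * γ i - 1) / (1 + Q * γ i) → Q = P i)
    (μ : Fin n → ℝ) (hμ : ∀ i, μ i = L / Real.log (1 + P i * γ i))
    (G : Finset (Fin n) → ℝ)
    (hG : ∀ S : Finset (Fin n), G S =
      (∑ i ∈ S, (Y i - (X / Ts) * P i * μ i)) + Ψ * (Ts - ∑ i ∈ S, μ i))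
    (S : Finset (Fin n)) (i j : Fin n)
    (hiS : i ∉ S) (hjS : j ∈ S) (hY : Y j < Y i) (hγij : γ j < γ i) :
    G S < G (insert i (S.erase j)) ∧ ¬ (∀ S' : Finset (Fin n), G S' ≤ G S) := by
  -- basic facts about t k = 1 + P k * γ k
  set t : Fin n → ℝ := fun k => 1 + P k * γ k with ht
  have ht1 : ∀ k, 1 < t k := by
    intro k
    have := mul_pos (hP_pos k) (hγ k)
    simp only [ht]; linarith
  have ht0 : ∀ k, (0:ℝ) < t k := fun k => lt_trans one_pos (ht1 k)
  have hlogpos : ∀ k, 0 < Real.log (t k) := fun k => Real.log_pos (ht1 k)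
  -- identity: φ * γ k = t k * log (t k) - t k + 1
  have hid : ∀ k, φ * γ k = t k * Real.log (t k) - t k + 1 := by
    intro k
    have h := hP_eq k
    have htne : t k ≠ 0 := ne_of_gt (ht0 k)
    rw [show (1 + P k * γ k) = t k from rfl] at h
    field_simp at h
    linarith
  -- t j < t i
  have htij : t j < t i := by
    have hgij : φ * γ j < φ * γ i := (mul_lt_mul_iff_right₀ hφ).2 hγij
    by_contra hcon
    push_neg at hcon
    rcases eq_or_lt_of_le hcon with heq | hlt
    · rw [hid i, hid j, heq] at hgij; linarith
    · have := aux_gmono (le_of_lt (ht1 i)) hlt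
      rw [hid i, hid j] at hgij; linarith
  have hlogij : Real.log (t j) < Real.log (t i) := Real.log_lt_log (ht0 j) htij
  -- μ i < μ j
  have hμij : μ i < μ j := by
    rw [hμ i, hμ j]
    exact div_lt_div_of_pos_left hL (hlogpos j) hlogij
  -- P k * μ k = L * φ * hfun (t k)
  have hPμ : ∀ k, P k * μ k = L * φ * hfun (t k) := by
    intro k
    rw [hμ k]
    unfold hfun
    rw [show (1 + P k * γ k) = t k from rfl, ← hid k]
    have h1 : t k - 1 = P k * γ k := by simp [ht]
    rw [h1]
    have hγk := hγ k
    have hlk := hlogpos k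
    field_simp
  -- P i * μ i < P j * μ j
  have hPμij : P i * μ i < P j * μ j := by
    rw [hPμ i, hPμ j]
    have := aux_hfun_anti (Set.mem_Ioi.2 (ht1 j)) (Set.mem_Ioi.2 (ht1 i)) htij
    have hLφ : 0 < L * φ := mul_pos hL hφ
    exact (mul_lt_mul_iff_right₀ hLφ).2 this
  -- Finset algebra
  have hij : i ≠ j := by rintro rfl; exact hiS hjS
  have hiE : i ∉ S.erase j := fun h => hiS (Finset.mem_of_mem_erase h)
  have hsum : ∀ f : Fin n → ℝ,
      ∑ k ∈ insert i (S.erase j), f k = f i + (∑ k ∈ S, f k) - f j := by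
    intro f
    rw [Finset.sum_insert hiE]
    have := Finset.sum_erase_add S f hjS
    linarith
  have hmain : G S < G (insert i (S.erase j)) := by
    rw [hG S, hG (insert i (S.erase j)),
      hsum (fun k => Y k - (X / Ts) * P k * μ k), hsum μ]
    have hXT : 0 < X / Ts := div_pos hX hTs
    have h1 : 0 < (X / Ts) * (P j * μ j - P i * μ i) :=
      mul_pos hXT (by linarith)
    have h2 : 0 ≤ Ψ * (μ j - μ i) := mul_nonneg hΨ (by linarith)
    nlinarith
  exact ⟨hmain, fun h => absurd (h (insert i (S.erase j))) (not_le.2 hmain)⟩
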